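/- Let ρ₁, ρ₂ be unitary representations of R^d on a Hilbert space H satisfying the covariance relation ρ₁(x) ρ₂(y) ρ₁(x)^{-1} = e^{iα x·y} ρ₂(y) for all x, y ∈ R^d, with α ≠ 0. Define on L²(R^d) the canonical pair (ρ̃₁(x)f)(ξ) = f(ξ+x) and (ρ̃₂(y)f)(ξ) = e^{iα y·ξ} f(ξ). Then ρ̃₁ and ρ̃₂ satisfy the same covariance relation and act jointly irreducibly on L²(R^d): every closed subspace invariant under all ρ̃₁(x) and ρ̃₂(y) is {0} or L²(R^d). -/

import Mathlib

open scoped BigOperators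
open MeasureTheory

/-- The canonical translation representation `(ρ̃₁(x) f)(ξ) = f(ξ + x)` of `ℝ^d`. -/
def rhoTrans (d : ℕ) (x : Fin d → ℝ) (f : (Fin d → ℝ) → ℂ) : (Fin d → ℝ) → ℂ :=
  fun ξ => f (ξ + x)

/-- The canonical modulation representation `(ρ̃₂(y) f)(ξ) = e^{iα y·ξ} f(ξ)` of `ℝ^d`. -/
noncomputable def rhoMod (d : ℕ) (α : ℝ) (y : Fin d → ℝ) (f : (Fin d → ℝ) → ℂ) :
    (Fin d → ℝ) → ℂ :=
  fun ξ => Complex.exp (Complex.I * ((α * ∑ j, y j * ξ j : ℝ) : ℂ)) * f ξ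


open Filter MeasureTheory Complex Module Metric Real
open scoped Topology FourierTransform RealInnerProductSpace ComplexConjugate

section FourierUniqueness

variable {V : Type*} [NormedAddCommGroup V] [InnerProductSpace ℝ V]
  [MeasurableSpace V] [BorelSpace V] [FiniteDimensional ℝ V]

variable {V : Type*} [NormedAddCommGroup V] [InnerProductSpace ℝ V]
  [MeasurableSpace V] [BorelSpace V] [FiniteDimensional ℝ V]

-- step (a): gaussian convolution of F vanishes
lemma gauss_conv_zero {F : V → ℂ} (hF : Integrable F) (hFT : ∀ w, 𝓕 F w = 0)
    {c : ℝ} (hc : 0 < c) (v : V) :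
    ∫ w : V, ((π * c : ℂ) ^ (finrank ℝ V / 2 : ℂ) * cexp (-π ^ 2 * c * ‖v - w‖ ^ 2)) • F w = 0 := by
  have hinv : 0 < ((c⁻¹ : ℂ)).re := by simpa using inv_pos.2 hc
  have J : Integrable (fun w : V ↦ cexp (- (c⁻¹ : ℂ) * ‖w‖^2 + 2 * π * I * ⟪v, w⟫)) :=
    GaussianFourier.integrable_cexp_neg_mul_sq_norm_add (by simpa) _ _
  have key := (VectorFourier.integral_fourierIntegral_smul_eq_flip (L := innerₗ V)
      Real.continuous_fourierChar continuous_inner J hF)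
  have Rzero : ∫ x : V, (fun w : V ↦ cexp (- (c⁻¹ : ℂ) * ‖w‖^2 + 2 * π * I * ⟪v, w⟫)) x •
      (VectorFourier.fourierIntegral 𝐞 volume (innerₗ V).flip F x) = 0 := by
    have : ∀ x : V, VectorFourier.fourierIntegral 𝐞 volume (innerₗ V).flip F x = 0 := by
      intro x
      have : VectorFourier.fourierIntegral 𝐞 volume (innerₗ V).flip F x = 𝓕 F x := by
        rw [Real.fourier_eq]
        unfold VectorFourier.fourierIntegral
        congr 1 with ξ
        simp [real_inner_comm]
      rw [this, hFT]
    have h2 : ∀ x : V, VectorFourier.fourierIntegral 𝐞 volume (innerₗ V) F x = 0 := hFT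
    simp [this, h2]
  rw [Rzero] at key
  have lhs : ∀ ξ : V, (VectorFourier.fourierIntegral 𝐞 volume (innerₗ V)
      (fun w : V ↦ cexp (- (c⁻¹ : ℂ) * ‖w‖^2 + 2 * π * I * ⟪v, w⟫)) ξ)
      = ((π * c : ℂ) ^ (finrank ℝ V / 2 : ℂ) * cexp (-π ^ 2 * c * ‖v - ξ‖ ^ 2)) := by
    intro ξ
    have := fourier_gaussian_innerProductSpace' (b := (c⁻¹ : ℂ)) (by simpa) v ξ
    rw [show (𝓕 (fun w : V ↦ cexp (- (c⁻¹:ℂ) * ‖w‖^2 + 2 * π * I * ⟪v, w⟫)) ξ) =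
        VectorFourier.fourierIntegral 𝐞 volume (innerₗ V)
        (fun w : V ↦ cexp (- (c⁻¹ : ℂ) * ‖w‖^2 + 2 * π * I * ⟪v, w⟫)) ξ from rfl] at this
    rw [this]
    congr 1
    · rw [div_eq_mul_inv, inv_inv]
    · congr 1
      push_cast
      field_simp
  rw [← key]
  apply integral_congr_ae
  filter_upwards with ξ
  rw [lhs ξ]

theorem fourier_zero_ae {F : V → ℂ} (hF : Integrable F) (hFT : ∀ w, 𝓕 F w = 0) :
    ∀ᵐ v : V, F v = 0 := by
  apply ae_eq_zero_of_integral_contDiff_smul_eq_zero hF.locallyIntegrable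
  intro ψ hψ hψc
  set n := finrank ℝ V with hn
  set Ψ : V → ℂ := fun x => (ψ x : ℂ) with hΨ
  have hΨcont : Continuous Ψ := Complex.continuous_ofReal.comp hψ.continuous
  have hΨint : Integrable Ψ := (hψ.continuous.integrable_of_hasCompactSupport hψc).ofReal
  obtain ⟨C, hC⟩ := hψc.exists_bound_of_continuous hψ.continuous
  set K : ℝ → V → V → ℂ := fun c v w =>
    ((π * c : ℂ) ^ (n / 2 : ℂ) * cexp (-(π:ℂ) ^ 2 * c * ‖v - w‖ ^ 2)) with hK
  set k : ℝ → V → V → ℝ := fun c v w =>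
    ((π * c : ℝ) ^ ((n : ℝ) / 2) * rexp (-π ^ 2 * c * ‖v - w‖ ^ 2)) with hk
  have Kreal : ∀ {c : ℝ}, 0 < c → ∀ v w, K c v w = ((k c v w : ℝ) : ℂ) := by
    intro c hc v w
    have h1 : ((((π * c : ℝ) ^ ((n:ℝ)/2) : ℝ)) : ℂ) = (π * c : ℂ) ^ (n / 2 : ℂ) := by
      rw [Complex.ofReal_cpow (by positivity)]
      push_cast
      ring_nf
    simp only [hK, hk, Complex.ofReal_mul, Complex.ofReal_exp, h1]
    push_cast
    ring_nf
  have ksymm : ∀ c v w, k c v w = k c w v := by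
    intro c v w; simp only [hk, norm_sub_rev]
  have Ksymm : ∀ c v w, K c v w = K c w v := by
    intro c v w; simp only [hK, norm_sub_rev]
  have kpos : ∀ {c : ℝ}, 0 < c → ∀ v w, 0 ≤ k c v w := by
    intro c hc v w; simp only [hk]; positivity
  have kbdd : ∀ {c : ℝ}, 0 < c → ∀ v w, k c v w ≤ (π * c : ℝ) ^ ((n : ℝ)/2) := by
    intro c hc v w
    have : rexp (-π ^ 2 * c * ‖v - w‖ ^ 2) ≤ 1 := by
      apply Real.exp_le_one_iff.2
      have : 0 ≤ π ^ 2 * c * ‖v - w‖ ^ 2 := by positivity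
      linarith
    calc k c v w ≤ (π * c : ℝ) ^ ((n : ℝ)/2) * 1 := by
          apply mul_le_mul_of_nonneg_left this (by positivity)
      _ = _ := mul_one _
  have gauss_int : ∀ {b : ℝ}, 0 < b → Integrable (fun v : V => rexp (-b * ‖v‖ ^ 2)) := by
    intro b hb
    have := ((GaussianFourier.integrable_cexp_neg_mul_sq_norm_add (V := V)
      (b := (b : ℂ)) (by simpa using hb) 0 0)).norm
    apply this.congr
    filter_upwards with v
    simp [Complex.norm_exp, ← Complex.ofReal_pow]
  have kint_v : ∀ {c : ℝ}, 0 < c → ∀ w, Integrable (fun v => k c w v) := by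
    intro c hc w
    apply Integrable.const_mul
    have h := (gauss_int (b := π^2 * c) (by positivity)).comp_sub_right w
    apply h.congr
    filter_upwards with v
    rw [norm_sub_rev]
    ring_nf
  have kint_one : ∀ {c : ℝ}, 0 < c → ∀ w, ∫ v, k c w v = 1 := by
    intro c hc w
    simp only [hk]
    rw [integral_const_mul]
    have : (fun v => rexp (-π ^ 2 * c * ‖w - v‖ ^ 2)) =
        (fun v => (fun u => rexp (-(π ^ 2 * c) * ‖u‖ ^ 2)) (v - w)) := by
      funext v; rw [norm_sub_rev]; ring_nf
    rw [this, integral_sub_right_eq_self (fun u : V => rexp (-(π ^ 2 * c) * ‖u‖ ^ 2)) w,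
      GaussianFourier.integral_rexp_neg_mul_sq_norm (by positivity)]
    rw [← Real.mul_rpow (by positivity) (by positivity)]
    rw [show (π * c) * (π / (π^2 * c)) = 1 by field_simp]
    simp
  have Kcont : ∀ c : ℝ, Continuous (fun p : V × V => K c p.1 p.2) := by
    intro c
    apply Continuous.mul continuous_const
    apply Complex.continuous_exp.comp
    apply Continuous.mul continuous_const
    exact Continuous.pow (Complex.continuous_ofReal.comp ((continuous_fst.sub continuous_snd).norm)) 2
  have hzero : ∀ {c : ℝ}, 0 < c → ∀ v : V, ∫ w, K c v w * F w = 0 := by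
    intro c hc v
    have := gauss_conv_zero hF hFT hc v
    simp only [smul_eq_mul] at this
    exact this
  have Cnonneg : 0 ≤ C := le_trans (norm_nonneg _) (hC 0)
  have hswap : ∀ {c : ℝ}, 0 < c → ∫ w, (∫ v, K c w v * Ψ v) * F w = 0 := by
    intro c hc
    have hu : Integrable (fun p : V × V => K c p.1 p.2 * Ψ p.2 * F p.1)
        (volume.prod volume) := by
      have haesm : AEStronglyMeasurable (fun p : V × V => K c p.1 p.2 * Ψ p.2 * F p.1)
          (volume.prod volume) := by
        apply AEStronglyMeasurable.mul
        · exact ((Kcont c).mul (hΨcont.comp continuous_snd)).aestronglyMeasurable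
        · exact hF.1.comp_fst
      have hψint : Integrable ψ := hψ.continuous.integrable_of_hasCompactSupport hψc
      have hbound : Integrable
          (fun p : V × V => ((π * c : ℝ) ^ ((n:ℝ)/2) * ‖F p.1‖) * ‖ψ p.2‖)
          (volume.prod volume) := (hF.norm.const_mul _).mul_prod hψint.norm
      apply hbound.mono' haesm
      filter_upwards with p
      have h1 : ‖K c p.1 p.2 * Ψ p.2 * F p.1‖ = k c p.1 p.2 * ‖ψ p.2‖ * ‖F p.1‖ := by
        rw [Kreal hc]
        simp only [norm_mul, hΨ, Complex.norm_real]
        rw [Real.norm_of_nonneg (kpos hc _ _)]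
      rw [h1]
      have := kbdd hc p.1 p.2
      calc k c p.1 p.2 * ‖ψ p.2‖ * ‖F p.1‖
          ≤ (π * c : ℝ) ^ ((n:ℝ)/2) * ‖ψ p.2‖ * ‖F p.1‖ := by
            apply mul_le_mul_of_nonneg_right _ (norm_nonneg _)
            exact mul_le_mul_of_nonneg_right this (norm_nonneg _)
        _ = (π * c : ℝ) ^ ((n:ℝ)/2) * ‖F p.1‖ * ‖ψ p.2‖ := by ring
    have swap := integral_integral_swap (f := fun w v => K c w v * Ψ v * F w) hu
    have lhs_eq : ∫ w : V, ∫ v : V, K c w v * Ψ v * F w =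
        ∫ w : V, (∫ v, K c w v * Ψ v) * F w := by
      congr 1 with w
      rw [← integral_mul_const]
    have rhs_eq : ∫ v : V, ∫ w : V, K c w v * Ψ v * F w = 0 := by
      have : ∀ v : V, ∫ w : V, K c w v * Ψ v * F w = 0 := by
        intro v
        have : (fun w : V => K c w v * Ψ v * F w) = fun w => Ψ v * (K c v w * F w) := by
          funext w; rw [Ksymm c v w]; ring
        rw [this, integral_const_mul, hzero hc v, mul_zero]
      simp [this]
    rw [← lhs_eq, swap, rhs_eq]
  have meas_J : ∀ c : ℝ, AEStronglyMeasurable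
      (fun w : V => ∫ v, K c w v * Ψ v) volume := by
    intro c
    have hsm : StronglyMeasurable (fun p : V × V => K c p.1 p.2 * Ψ p.2) :=
      ((Kcont c).mul (hΨcont.comp continuous_snd)).stronglyMeasurable
    exact hsm.integral_prod_right'.aestronglyMeasurable
  have Jbdd : ∀ {c : ℝ}, 0 < c → ∀ w : V, ‖∫ v, K c w v * Ψ v‖ ≤ C := by
    intro c hc w
    calc ‖∫ v, K c w v * Ψ v‖ ≤ ∫ v, ‖K c w v * Ψ v‖ := norm_integral_le_integral_norm _
      _ ≤ ∫ v, k c w v * C := by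
          apply integral_mono_of_nonneg
          · filter_upwards with v; positivity
          · exact (kint_v hc w).mul_const C
          · filter_upwards with v
            rw [Kreal hc]
            simp only [norm_mul, hΨ, Complex.norm_real]
            rw [Real.norm_of_nonneg (kpos hc _ _)]
            exact mul_le_mul_of_nonneg_left (hC v) (kpos hc _ _)
      _ = (∫ v, k c w v) * C := integral_mul_const _ _
      _ = C := by rw [kint_one hc w, one_mul]
  have tend : Filter.Tendsto (fun c : ℝ => ∫ w, (∫ v, K c w v * Ψ v) * F w)
      Filter.atTop (𝓝 (∫ w, Ψ w * F w)) := by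
    apply tendsto_integral_filter_of_dominated_convergence (fun w => C * ‖F w‖)
    · filter_upwards with c
      exact (meas_J c).mul hF.1
    · filter_upwards [Filter.Ioi_mem_atTop (0:ℝ)] with c (hc : 0 < c)
      filter_upwards with w
      rw [norm_mul]
      exact mul_le_mul_of_nonneg_right (Jbdd hc w) (norm_nonneg _)
    · exact hF.norm.const_mul C
    · filter_upwards with w
      apply Filter.Tendsto.mul_const
      have := Real.tendsto_integral_gaussian_smul' hΨint hΨcont.continuousAt (v := w)
      simp only [smul_eq_mul] at this
      exact this
  have ev0 : (fun c : ℝ => ∫ w, (∫ v, K c w v * Ψ v) * F w) =ᶠ[Filter.atTop]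
      (fun _ => (0 : ℂ)) := by
    filter_upwards [Filter.Ioi_mem_atTop (0:ℝ)] with c (hc : 0 < c)
    exact hswap hc
  have : ∫ w, Ψ w * F w = 0 :=
    tendsto_nhds_unique (tend.congr' ev0) tendsto_const_nhds
  calc ∫ x, ψ x • F x = ∫ w, Ψ w * F w := by
        apply integral_congr_ae
        filter_upwards with x
        simp [hΨ, Complex.real_smul]
    _ = 0 := this

end FourierUniqueness

lemma slice_ae_zero {d : ℕ} {α : ℝ} (hα : α ≠ 0) {f g : (Fin d → ℝ) → ℂ}
    (hint : ∀ x : Fin d → ℝ, Integrable (fun ξ => conj (f (ξ + x)) * g ξ))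
    (H : ∀ x y : Fin d → ℝ, ∫ ξ, conj (rhoMod d α y (rhoTrans d x f) ξ) * g ξ = 0)
    (x : Fin d → ℝ) :
    ∀ᵐ ξ : Fin d → ℝ, conj (f (ξ + x)) * g ξ = 0 := by
  set E := EuclideanSpace ℝ (Fin d)
  set e : E ≃ᵐ (Fin d → ℝ) := (MeasurableEquiv.toLp 2 (Fin d → ℝ)).symm with he
  have mp : MeasurePreserving e volume volume :=
    EuclideanSpace.volume_preserving_symm_measurableEquiv_toLp (Fin d)
  set G : (Fin d → ℝ) → ℂ := fun ξ => conj (f (ξ + x)) * g ξ with hG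
  have hFE : Integrable (G ∘ e) volume :=
    (mp.integrable_comp_emb e.measurableEmbedding).2 (hint x)
  have hFT : ∀ w : E, 𝓕 (G ∘ e) w = 0 := by
    intro w
    have hy := H x (fun j => (2 * π / α) * w j)
    -- rewrite the hypothesis integrand
    have hy' : ∫ ξ : Fin d → ℝ,
        Complex.exp (↑(2 * π * (-(∑ j, w j * ξ j))) * Complex.I) * G ξ = 0 := by
      rw [← hy]
      apply integral_congr_ae
      filter_upwards with ξ
      simp only [rhoMod, rhoTrans, hG]
      rw [map_mul, ← Complex.exp_conj]
      have h1 : (starRingEnd ℂ) (Complex.I * ((α * ∑ j, ((2 * π / α) * w j) * ξ j : ℝ) : ℂ))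
          = ↑(2 * π * (-(∑ j, w j * ξ j))) * Complex.I := by
        rw [map_mul, Complex.conj_I, Complex.conj_ofReal]
        have : (α * ∑ j, ((2 * π / α) * w j) * ξ j : ℝ) = 2 * π * ∑ j, w j * ξ j := by
          rw [Finset.mul_sum]
          rw [show ∑ j, α * ((2 * π / α) * w j * ξ j) = ∑ j, (2 * π) * (w j * ξ j) by
            apply Finset.sum_congr rfl; intro j _; field_simp]
          rw [← Finset.mul_sum]
        rw [this]
        push_cast
        ring
      rw [h1]
      ring
    -- now identify 𝓕 (G ∘ e) w with the integral above
    rw [show 𝓕 (G ∘ e) w = ∫ v : E, 𝐞 (-⟪v, w⟫) • (G ∘ e) v from rfl]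
    rw [← hy']
    rw [← MeasurePreserving.integral_comp mp e.measurableEmbedding
      (fun ξ : Fin d → ℝ => Complex.exp (↑(2 * π * (-(∑ j, w j * ξ j))) * Complex.I) * G ξ)]
    apply integral_congr_ae
    filter_upwards with v
    rw [Circle.smul_def, Real.fourierChar_apply]
    have hip : ⟪v, w⟫ = ∑ j, w j * (e v) j := by
      rw [PiLp.inner_apply]
      apply Finset.sum_congr rfl
      intro j _
      rw [RCLike.inner_apply, starRingEnd_apply, star_trivial, mul_comm]
      exact mul_comm _ _
    rw [hip]
    norm_num
  have hae := fourier_zero_ae hFE hFT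
  have : ∀ᵐ ξ ∂(Measure.map e (volume : Measure E)), G ξ = 0 :=
    (e.measurableEmbedding.ae_map_iff).2 hae
  rwa [mp.map_eq] at this

lemma measure_zero_or {d : ℕ} {f g : (Fin d → ℝ) → ℂ}
    (hfm : Measurable f) (hgm : Measurable g)
    (h : ∀ x : Fin d → ℝ, ∀ᵐ ξ : Fin d → ℝ, conj (f (ξ + x)) * g ξ = 0) :
    volume {ξ | f ξ ≠ 0} = 0 ∨ volume {ξ | g ξ ≠ 0} = 0 := by
  set A : Set (Fin d → ℝ) := {ξ | f ξ ≠ 0} with hA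
  set B : Set (Fin d → ℝ) := {ξ | g ξ ≠ 0} with hB
  have hAm : MeasurableSet A := (hfm (measurableSet_singleton 0)).compl
  have hBm : MeasurableSet B := (hgm (measurableSet_singleton 0)).compl
  have indAm : Measurable (A.indicator (1 : (Fin d → ℝ) → ENNReal)) :=
    measurable_one.indicator hAm
  have indBm : Measurable (B.indicator (1 : (Fin d → ℝ) → ENNReal)) :=
    measurable_one.indicator hBm
  have h1 : ∀ x : Fin d → ℝ, ∫⁻ ξ,
      A.indicator (1 : (Fin d → ℝ) → ENNReal) (ξ + x) * B.indicator (1 : (Fin d → ℝ) → ENNReal) ξ = 0 := by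
    intro x
    rw [show (0 : ENNReal) = ∫⁻ _ : Fin d → ℝ, 0 by simp]
    apply lintegral_congr_ae
    filter_upwards [h x] with ξ hξ
    rcases mul_eq_zero.1 hξ with h0 | h0
    · have : ξ + x ∉ A := by
        simp only [hA, Set.mem_setOf_eq, not_not]
        simpa using h0
      rw [Set.indicator_of_notMem this, zero_mul]
    · have : ξ ∉ B := by simp only [hB, Set.mem_setOf_eq, not_not]; exact h0
      rw [Set.indicator_of_notMem this, mul_zero]
  have h2 : ∫⁻ x : Fin d → ℝ, ∫⁻ ξ : Fin d → ℝ,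
      A.indicator (1 : (Fin d → ℝ) → ENNReal) (ξ + x) * B.indicator (1 : (Fin d → ℝ) → ENNReal) ξ = 0 := by
    simp [h1]
  have hswap := lintegral_lintegral_swap (μ := (volume : Measure (Fin d → ℝ)))
    (ν := (volume : Measure (Fin d → ℝ)))
    (f := fun x ξ => A.indicator (1 : (Fin d → ℝ) → ENNReal) (ξ + x) * B.indicator (1 : (Fin d → ℝ) → ENNReal) ξ)
    (((indAm.comp (measurable_snd.add measurable_fst)).mul
      (indBm.comp measurable_snd)).aemeasurable)
  rw [hswap] at h2
  have h3 : ∀ ξ : Fin d → ℝ, ∫⁻ x : Fin d → ℝ,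
      A.indicator (1 : (Fin d → ℝ) → ENNReal) (ξ + x) * B.indicator (1 : (Fin d → ℝ) → ENNReal) ξ
      = B.indicator (1 : (Fin d → ℝ) → ENNReal) ξ * volume A := by
    intro ξ
    rw [lintegral_mul_const _ (f := fun x => A.indicator (1 : (Fin d → ℝ) → ENNReal) (ξ + x)) (indAm.comp (measurable_const_add ξ))]
    rw [mul_comm]
    congr 1
    calc ∫⁻ x, A.indicator (1 : (Fin d → ℝ) → ENNReal) (ξ + x)
        = ∫⁻ x, ((A.indicator (1 : (Fin d → ℝ) → ENNReal)) ∘ (fun u => ξ + u)) x := rfl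
      _ = ∫⁻ b, A.indicator (1 : (Fin d → ℝ) → ENNReal) b :=
          (measurePreserving_add_left (volume : Measure (Fin d → ℝ)) ξ).lintegral_comp indAm
      _ = volume A := lintegral_indicator_one hAm
  simp_rw [h3] at h2
  rw [lintegral_mul_const _ indBm, lintegral_indicator_one hBm] at h2
  rcases mul_eq_zero.1 h2 with h0 | h0
  · exact Or.inr h0
  · exact Or.inl h0


/-- (Stone–von Neumann, canonical pair.)  The canonical pair `ρ̃₁, ρ̃₂` on `L²(ℝ^d)` defined by
`(ρ̃₁(x)f)(ξ) = f(ξ+x)` and `(ρ̃₂(y)f)(ξ) = e^{iα y·ξ} f(ξ)` satisfies the covariance relation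
`ρ̃₁(x) ρ̃₂(y) ρ̃₁(x)⁻¹ = e^{iα x·y} ρ̃₂(y)` and acts jointly irreducibly on `L²(ℝ^d)`: every
closed subspace invariant under all `ρ̃₁(x)` and `ρ̃₂(y)` is `{0}` or `L²(ℝ^d)`. -/
theorem stone_von_neumann_canonical_pair (d : ℕ) (α : ℝ) (hα : α ≠ 0) :
    (∀ (f : (Fin d → ℝ) → ℂ) (x y : Fin d → ℝ),
      rhoTrans d x (rhoMod d α y (rhoTrans d (-x) f))
        = fun ξ => Complex.exp (Complex.I * ((α * ∑ j, x j * y j : ℝ) : ℂ))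
            * rhoMod d α y f ξ) ∧
    (∀ S : Submodule ℂ (Lp ℂ 2 (volume : Measure (Fin d → ℝ))),
      IsClosed (S : Set (Lp ℂ 2 (volume : Measure (Fin d → ℝ)))) →
      (∀ f : Lp ℂ 2 (volume : Measure (Fin d → ℝ)), f ∈ S →
        ∀ (x : Fin d → ℝ) (g : Lp ℂ 2 (volume : Measure (Fin d → ℝ))),
          (⇑g =ᵐ[volume] rhoTrans d x ⇑f) → g ∈ S) →
      (∀ f : Lp ℂ 2 (volume : Measure (Fin d → ℝ)), f ∈ S →
        ∀ (y : Fin d → ℝ) (g : Lp ℂ 2 (volume : Measure (Fin d → ℝ))),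
          (⇑g =ᵐ[volume] rhoMod d α y ⇑f) → g ∈ S) →
      S = ⊥ ∨ S = ⊤) := by
  constructor
  · intro f x y
    funext ξ
    simp only [rhoTrans, rhoMod]
    rw [add_neg_cancel_right, ← mul_assoc, ← Complex.exp_add]
    congr 2
    have h1 : ∑ j, y j * (ξ + x) j = (∑ j, x j * y j) + ∑ j, y j * ξ j := by
      simp only [Pi.add_apply, mul_add]
      rw [Finset.sum_add_distrib, add_comm]
      congr 1
      exact Finset.sum_congr rfl fun j _ => mul_comm _ _
    rw [h1]
    push_cast
    ring
  · intro S hScl hS1 hS2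
    by_cases hbot : S = ⊥
    · exact Or.inl hbot
    right
    haveI : CompleteSpace S := hScl.completeSpace_coe
    rw [← Submodule.orthogonal_eq_bot_iff, Submodule.eq_bot_iff]
    intro g hg
    obtain ⟨f, hfS, hf0⟩ := Submodule.exists_mem_ne_zero_of_ne_bot hbot
    have memT : ∀ x : Fin d → ℝ, MemLp (rhoTrans d x ⇑f) 2 (volume : Measure (Fin d → ℝ)) :=
      fun x => (Lp.memLp f).comp_measurePreserving (measurePreserving_add_right volume x)
    have memM : ∀ (h : (Fin d → ℝ) → ℂ), MemLp h 2 (volume : Measure (Fin d → ℝ)) →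
        ∀ y : Fin d → ℝ, MemLp (rhoMod d α y h) 2 volume := by
      intro h hh y
      refine MemLp.of_le hh ?_ ?_
      · have hc : Continuous (fun ξ : Fin d → ℝ =>
            Complex.exp (Complex.I * ((α * ∑ j, y j * ξ j : ℝ) : ℂ))) := by
          apply Complex.continuous_exp.comp
          apply continuous_const.mul
          apply Complex.continuous_ofReal.comp
          apply continuous_const.mul
          exact continuous_finset_sum _ fun j _ =>
            continuous_const.mul (continuous_apply j)
        exact hc.aestronglyMeasurable.mul hh.1
      · filter_upwards with ξ
        apply le_of_eq
        simp only [rhoMod, norm_mul]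
        rw [show ‖Complex.exp (Complex.I * ((α * ∑ j, y j * ξ j : ℝ) : ℂ))‖ = 1 by
          rw [Complex.norm_exp]
          simp [Complex.mul_re]]
        rw [one_mul]
    have H : ∀ x y : Fin d → ℝ,
        ∫ ξ, (starRingEnd ℂ) (rhoMod d α y (rhoTrans d x ⇑f) ξ) * ⇑g ξ = 0 := by
      intro x y
      have m1 := memT x
      have m2 := memM _ m1 y
      have hu1 : ⇑(m1.toLp _) =ᵐ[volume] rhoTrans d x ⇑f := m1.coeFn_toLp
      have hu2 : ⇑(m2.toLp _) =ᵐ[volume] rhoMod d α y (rhoTrans d x ⇑f) := m2.coeFn_toLp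
      have hu1S : (m1.toLp _) ∈ S := hS1 f hfS x _ hu1
      have huS : (m2.toLp _) ∈ S := by
        apply hS2 (m1.toLp _) hu1S y
        filter_upwards [hu2, hu1] with ξ h2 h1
        rw [h2]
        simp only [rhoMod]
        rw [h1]
      have hinner : (inner ℂ (m2.toLp _) g : ℂ) = 0 :=
        (Submodule.mem_orthogonal S g).1 hg _ huS
      calc ∫ ξ, (starRingEnd ℂ) (rhoMod d α y (rhoTrans d x ⇑f) ξ) * ⇑g ξ
          = ∫ ξ, (starRingEnd ℂ) ((m2.toLp _) ξ) * ⇑g ξ := by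
            apply integral_congr_ae
            filter_upwards [hu2] with ξ h2
            rw [h2]
        _ = (inner ℂ (m2.toLp _) g : ℂ) := by
            rw [MeasureTheory.L2.inner_def]
            apply integral_congr_ae
            filter_upwards with ξ
            rw [RCLike.inner_apply, mul_comm]
        _ = 0 := hinner
    have hint : ∀ x : Fin d → ℝ,
        Integrable (fun ξ => (starRingEnd ℂ) (⇑f (ξ + x)) * ⇑g ξ) volume := by
      intro x
      have hi := MeasureTheory.L2.integrable_inner (𝕜 := ℂ) ((memT x).toLp _) g
      apply hi.congr
      filter_upwards [(memT x).coeFn_toLp] with ξ h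
      rw [RCLike.inner_apply, h]
      exact mul_comm _ _
    have hae : ∀ x : Fin d → ℝ, ∀ᵐ ξ : Fin d → ℝ,
        (starRingEnd ℂ) (⇑f (ξ + x)) * ⇑g ξ = 0 :=
      fun x => slice_ae_zero hα hint H x
    rcases measure_zero_or (Lp.stronglyMeasurable f).measurable
        (Lp.stronglyMeasurable g).measurable hae with h0 | h0
    · exfalso
      apply hf0
      have hf_ae : ⇑f =ᵐ[volume] 0 := by
        rw [Filter.EventuallyEq, ae_iff]
        simpa using h0
      exact Subtype.ext ((Lp.eq_zero_iff_ae_eq_zero (f := f)).2 hf_ae ▸ rfl)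
    · have hg_ae : ⇑g =ᵐ[volume] 0 := by
        rw [Filter.EventuallyEq, ae_iff]
        simpa using h0
      exact (Lp.eq_zero_iff_ae_eq_zero (f := g)).2 hg_ae
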